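/- Let Z ~ G_γ with γ < 1. Define f₁(x) = x·G_γ(x) + E[Z·1(Z > x)]. Then f₁ admits the representation f₁(x) = ∫_{(1+γx)^{-1/γ}}^∞ e^{-t} t^{-γ-1} dt + β_{γ,0} for all x with 1+γx > 0, where β_{γ,0} = E[Z] (for γ = 0 the lower limit is e^{-x}). -/

import Mathlib

open MeasureTheory ProbabilityTheory Real
open Set

/-- `(1+γx)^(-1/γ)`, interpreted as `exp (-x)` for `γ = 0`. -/
noncomputable def gevTail (γ x : ℝ) : ℝ :=
  if γ = 0 then Real.exp (-x) else (1 + γ * x) ^ (-1 / γ)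

/-- The standard GEV cdf, extended to all of ℝ. -/
noncomputable def gevCdfFull (γ x : ℝ) : ℝ :=
  if γ = 0 then Real.exp (-Real.exp (-x))
  else if 1 + γ * x > 0 then Real.exp (-(1 + γ * x) ^ (-1 / γ))
  else if γ > 0 then 0 else 1

lemma gev_nonneg (γ x : ℝ) : 0 ≤ gevCdfFull γ x := by
  unfold gevCdfFull
  split_ifs <;> positivity

lemma gevTail_pos {γ x : ℝ} (hx : 0 < 1 + γ * x) : 0 < gevTail γ x := by
  unfold gevTail
  split_ifs
  · exact Real.exp_pos _
  · exact Real.rpow_pos_of_pos hx _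

lemma gInt {γ : ℝ} (hγ : γ < 1) {u : ℝ} (hu : 0 < u) :
    IntegrableOn (fun s => Real.exp (-s) * s ^ (-γ - 1)) (Set.Ioi u) := by
  rcases lt_or_ge γ 0 with h | h
  · have := Real.GammaIntegral_convergent (s := -γ) (by linarith)
    have h2 : IntegrableOn (fun s : ℝ => Real.exp (-s) * s ^ (-γ - 1)) (Set.Ioi 0) := by
      simpa using this
    exact h2.mono_set (Set.Ioi_subset_Ioi hu.le)
  · apply Integrable.mono' (((exp_neg_integrableOn_Ioi u one_pos).const_mul (u ^ (-γ - 1))))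
    · apply AEMeasurable.aestronglyMeasurable
      exact ((measurable_exp.comp measurable_neg).mul
        (measurable_id.pow_const _)).aemeasurable
    · filter_upwards [ae_restrict_mem measurableSet_Ioi] with s hs
      have hs0 : 0 < s := hu.trans hs
      have h1 : s ^ (-γ - 1) ≤ u ^ (-γ - 1) :=
        Real.rpow_le_rpow_of_nonpos hu (le_of_lt hs) (by linarith)
      have h2 : (0:ℝ) ≤ s ^ (-γ - 1) := Real.rpow_nonneg hs0.le _
      rw [Real.norm_eq_abs, abs_of_nonneg (by positivity)]
      calc Real.exp (-s) * s ^ (-γ - 1) ≤ Real.exp (-s) * u ^ (-γ - 1) := by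
            exact mul_le_mul_of_nonneg_left h1 (Real.exp_pos _).le
        _ = u ^ (-γ - 1) * Real.exp (-s) := mul_comm _ _
        _ = u ^ (-γ - 1) * Real.exp (-1 * s) := by rw [neg_one_mul]

lemma subst_zero (x : ℝ)
    (hgi : IntegrableOn (fun s => Real.exp (-s) * s ^ (-(0:ℝ) - 1)) (Set.Ioi (Real.exp (-x)))) :
    IntegrableOn (fun t => Real.exp (-Real.exp (-(x - t)))) (Set.Ioi (0:ℝ)) ∧
    ∫ s in Set.Ioi (Real.exp (-x)), Real.exp (-s) * s ^ (-(0:ℝ) - 1) =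
      ∫ t in Set.Ioi (0:ℝ), Real.exp (-Real.exp (-(x - t))) := by
  have hder : ∀ t ∈ Set.Ioi (0:ℝ),
      HasDerivWithinAt (fun t => Real.exp (t - x)) (Real.exp (t - x)) (Set.Ioi 0) t := by
    intro t _
    have : HasDerivAt (fun t => Real.exp (t - x)) (Real.exp (t - x) * 1) t :=
      ((hasDerivAt_id' t).sub_const x).exp
    simpa using this.hasDerivWithinAt
  have hinj : Set.InjOn (fun t => Real.exp (t - x)) (Set.Ioi 0) := fun a _ b _ h => by
    have := Real.exp_injective h; linarith
  have himg : (fun t => Real.exp (t - x)) '' (Set.Ioi 0) = Set.Ioi (Real.exp (-x)) := by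
    ext s; constructor
    · rintro ⟨t, ht, rfl⟩
      exact Real.exp_lt_exp.2 (by simpa using ht)
    · intro hs
      have hs0 : 0 < s := lt_trans (Real.exp_pos _) hs
      refine ⟨Real.log s + x, ?_, ?_⟩
      · have : -x < Real.log s := by
          have := Real.log_lt_log (Real.exp_pos _) hs
          simpa [Real.log_exp] using this
        simpa using by linarith
      · simp [Real.exp_log hs0]
  have hptwise : ∀ t ∈ Set.Ioi (0:ℝ),
      |Real.exp (t - x)| • (fun s => Real.exp (-s) * s ^ (-(0:ℝ) - 1)) (Real.exp (t - x))
        = Real.exp (-Real.exp (-(x - t))) := by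
    intro t _
    have he : (0:ℝ) < Real.exp (t - x) := Real.exp_pos _
    simp only [smul_eq_mul, abs_of_pos he, show (-(0:ℝ) - 1) = -1 by ring, Real.rpow_neg_one,
      show -(x - t) = t - x by ring]
    field_simp
  constructor
  · have := (integrableOn_image_iff_integrableOn_abs_deriv_smul measurableSet_Ioi hder hinj
      (fun s => Real.exp (-s) * s ^ (-(0:ℝ) - 1))).mp (by rwa [himg])
    exact this.congr_fun hptwise measurableSet_Ioi
  · rw [← himg, integral_image_eq_integral_abs_deriv_smul measurableSet_Ioi hder hinj]
    exact setIntegral_congr_fun measurableSet_Ioi hptwise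

lemma subst_ne {γ x : ℝ} (hγ0 : γ ≠ 0) (hx : 0 < 1 + γ * x) :
    IntegrableOn (fun s => Real.exp (-s) * s ^ (-γ - 1))
        (Set.Ioi ((1 + γ * x) ^ (-1/γ))) →
    (IntegrableOn (fun t => gevCdfFull γ (x - t))
        (Set.Ioi 0 ∩ {t : ℝ | 0 < 1 + γ * x - γ * t}) ∧
    ∫ s in Set.Ioi ((1 + γ * x) ^ (-1/γ)), Real.exp (-s) * s ^ (-γ - 1) =
      ∫ t in (Set.Ioi 0 ∩ {t : ℝ | 0 < 1 + γ * x - γ * t}), gevCdfFull γ (x - t)) := by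
  intro hgi
  set B : ℝ → ℝ := fun t => 1 + γ * x - γ * t with hB
  set φ : ℝ → ℝ := fun t => B t ^ (-1/γ) with hφ
  set u : ℝ := (1 + γ * x) ^ (-1/γ) with hu
  set dom : Set ℝ := Set.Ioi 0 ∩ {t : ℝ | 0 < 1 + γ * x - γ * t} with hdom
  have hu0 : 0 < u := Real.rpow_pos_of_pos hx _
  have hdm : MeasurableSet dom :=
    measurableSet_Ioi.inter (measurableSet_lt measurable_const (by fun_prop))
  have hder : ∀ t ∈ dom, HasDerivWithinAt φ (B t ^ (-1/γ - 1)) dom t := by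
    intro t ht
    have hBt : 0 < B t := ht.2
    have hBd : HasDerivAt B (-γ) t := by
      have : HasDerivAt (fun y : ℝ => 1 + γ * x - γ * y) (-(γ * 1)) t :=
        ((hasDerivAt_id t).const_mul γ).const_sub (1 + γ * x)
      simpa using this
    have h1 : HasDerivAt φ ((-γ) * (-1/γ) * B t ^ (-1/γ - 1)) t :=
      hBd.rpow_const (p := -1/γ) (Or.inl (ne_of_gt hBt))
    have h2 : (-γ) * (-1/γ) * B t ^ (-1/γ - 1) = B t ^ (-1/γ - 1) := by
      field_simp
    exact (h2 ▸ h1).hasDerivWithinAt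
  have key : ∀ a b : ℝ, 0 < B a → B a < B b → φ a < φ b ∨ φ b < φ a := by
    intro a b hBa hab
    rcases lt_or_gt_of_ne hγ0 with h | h
    · exact Or.inl (Real.rpow_lt_rpow hBa.le hab (div_pos_of_neg_of_neg (by norm_num) h))
    · exact Or.inr (Real.rpow_lt_rpow_of_neg hBa hab (div_neg_of_neg_of_pos (by norm_num) h))
  have hinj : Set.InjOn φ dom := by
    intro a ha b hb h
    rcases lt_trichotomy (B a) (B b) with hlt | heq | hgt
    · rcases key a b ha.2 hlt with h' | h' <;> exact absurd h (by linarith)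
    · have : γ * a = γ * b := by
        have := heq; simp only [hB] at this; linarith
      exact mul_left_cancel₀ hγ0 this
    · rcases key b a hb.2 hgt with h' | h' <;> exact absurd h (by linarith)
  have hupow : u ^ (-γ) = 1 + γ * x := by
    rw [hu, ← Real.rpow_mul hx.le]
    rw [show (-1/γ) * (-γ) = 1 by field_simp]
    exact Real.rpow_one _
  have himg : φ '' dom = Set.Ioi u := by
    ext s; constructor
    · rintro ⟨t, ⟨ht0, hBt⟩, rfl⟩
      simp only [Set.mem_Ioi]
      rcases lt_or_gt_of_ne hγ0 with h | h
      · have h1 : 1 + γ * x < B t := by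
          simp only [hB]; nlinarith [Set.mem_Ioi.mp ht0]
        exact Real.rpow_lt_rpow hx.le h1 (div_pos_of_neg_of_neg (by norm_num) h)
      · have h1 : B t < 1 + γ * x := by
          simp only [hB]; nlinarith [Set.mem_Ioi.mp ht0]
        exact Real.rpow_lt_rpow_of_neg hBt h1 (div_neg_of_neg_of_pos (by norm_num) h)
    · intro hs
      have hs' : u < s := hs
      have hs0 : 0 < s := hu0.trans hs'
      refine ⟨(1 + γ * x - s ^ (-γ)) / γ, ⟨?_, ?_⟩, ?_⟩
      · simp only [Set.mem_Ioi]
        rcases lt_or_gt_of_ne hγ0 with h | h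
        · have : u ^ (-γ) < s ^ (-γ) := Real.rpow_lt_rpow hu0.le hs' (by linarith)
          rw [hupow] at this
          have hnum : 1 + γ * x - s ^ (-γ) < 0 := by linarith
          exact div_pos_of_neg_of_neg hnum h
        · have : s ^ (-γ) < u ^ (-γ) := Real.rpow_lt_rpow_of_neg hu0 hs' (by linarith)
          rw [hupow] at this
          exact div_pos (by linarith) h
      · simp only [Set.mem_setOf_eq, hB]
        have : γ * ((1 + γ * x - s ^ (-γ)) / γ) = 1 + γ * x - s ^ (-γ) := by
          field_simp
        rw [this]
        have : (0:ℝ) < s ^ (-γ) := Real.rpow_pos_of_pos hs0 _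
        linarith
      · simp only [hφ, hB]
        have h1 : γ * ((1 + γ * x - s ^ (-γ)) / γ) = 1 + γ * x - s ^ (-γ) := by
          field_simp
        rw [h1]
        rw [show 1 + γ * x - (1 + γ * x - s ^ (-γ)) = s ^ (-γ) by ring]
        rw [← Real.rpow_mul hs0.le]
        rw [show (-γ) * (-1/γ) = 1 by field_simp]
        exact Real.rpow_one _
  have hptwise : ∀ t ∈ dom,
      |B t ^ (-1/γ - 1)| • (fun s => Real.exp (-s) * s ^ (-γ - 1)) (φ t)
        = gevCdfFull γ (x - t) := by
    intro t ht
    have hBt : 0 < B t := ht.2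
    have hG : gevCdfFull γ (x - t) = Real.exp (-(B t ^ (-1/γ))) := by
      unfold gevCdfFull
      rw [if_neg hγ0, show 1 + γ * (x - t) = B t from by simp only [hB]; ring, if_pos hBt]
    rw [hG]
    simp only [smul_eq_mul, abs_of_nonneg (Real.rpow_nonneg hBt.le _), hφ]
    rw [← Real.rpow_mul hBt.le]
    rw [show Real.exp (-B t ^ (-1/γ)) * B t ^ ((-1/γ) * (-γ - 1))
        = Real.exp (-B t ^ (-1/γ)) * B t ^ ((-1/γ) * (-γ - 1)) from rfl]
    have hsum : B t ^ (-1/γ - 1) * B t ^ ((-1/γ) * (-γ - 1)) = 1 := by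
      rw [← Real.rpow_add hBt]
      rw [show (-1/γ - 1) + (-1/γ) * (-γ - 1) = 0 by field_simp; ring]
      exact Real.rpow_zero _
    calc B t ^ (-1/γ - 1) * (Real.exp (-B t ^ (-1/γ)) * B t ^ ((-1/γ) * (-γ - 1)))
        = Real.exp (-B t ^ (-1/γ)) * (B t ^ (-1/γ - 1) * B t ^ ((-1/γ) * (-γ - 1))) := by ring
      _ = Real.exp (-B t ^ (-1/γ)) := by rw [hsum, mul_one]
  constructor
  · have := (integrableOn_image_iff_integrableOn_abs_deriv_smul hdm hder hinj
      (fun s => Real.exp (-s) * s ^ (-γ - 1))).mp (by rwa [himg])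
    exact this.congr_fun hptwise hdm
  · rw [← himg, integral_image_eq_integral_abs_deriv_smul hdm hder hinj]
    exact setIntegral_congr_fun hdm hptwise

lemma subst_main {γ x : ℝ} (hγ : γ < 1) (hx : 0 < 1 + γ * x) :
    IntegrableOn (fun t => gevCdfFull γ (x - t)) (Set.Ioi 0) ∧
    ∫ s in Set.Ioi (gevTail γ x), Real.exp (-s) * s ^ (-γ - 1) =
      ∫ t in Set.Ioi 0, gevCdfFull γ (x - t) := by
  by_cases hγ0 : γ = 0
  · subst hγ0
    have h0 := subst_zero x (by simpa using gInt (by norm_num : (0:ℝ) < 1) (Real.exp_pos (-x)))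
    have hfun : (fun t => gevCdfFull 0 (x - t)) = fun t => Real.exp (-Real.exp (-(x - t))) := by
      funext t; simp [gevCdfFull]
    rw [show gevTail 0 x = Real.exp (-x) from by simp [gevTail], hfun]
    simpa using h0
  · have hu : gevTail γ x = (1 + γ * x) ^ (-1/γ) := by simp [gevTail, hγ0]
    have hu0 : (0:ℝ) < (1 + γ * x) ^ (-1/γ) := Real.rpow_pos_of_pos hx _
    have h := subst_ne hγ0 hx (by rw [← hu]; exact gInt hγ (hu ▸ hu0))
    rcases h with ⟨hint, heq⟩
    set dom : Set ℝ := Set.Ioi 0 ∩ {t : ℝ | 0 < 1 + γ * x - γ * t} with hdom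
    rcases lt_or_gt_of_ne hγ0 with hneg | hpos
    · have hdeq : dom = Set.Ioi (0:ℝ) := by
        ext t
        simp only [hdom, Set.mem_inter_iff, Set.mem_Ioi, Set.mem_setOf_eq, and_iff_left_iff_imp]
        intro ht; nlinarith
      rw [hdeq] at hint heq
      rw [hu]
      exact ⟨hint, heq⟩
    · have hdm : MeasurableSet dom :=
        measurableSet_Ioi.inter (measurableSet_lt measurable_const (by fun_prop))
      have hsub : dom ⊆ Set.Ioi 0 := Set.inter_subset_left
      have hzero : ∀ t ∈ Set.Ioi (0:ℝ) \ dom, gevCdfFull γ (x - t) = 0 := by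
        rintro t ⟨ht0, htd⟩
        have h1 : ¬ (0 < 1 + γ * x - γ * t) := fun hc => htd ⟨ht0, hc⟩
        unfold gevCdfFull
        rw [if_neg hγ0, if_neg (by push_neg at h1 ⊢; linarith), if_pos hpos]
      have hdiffm : MeasurableSet (Set.Ioi (0:ℝ) \ dom) := measurableSet_Ioi.diff hdm
      have hint0 : IntegrableOn (fun t => gevCdfFull γ (x - t)) (Set.Ioi (0:ℝ) \ dom) :=
        integrableOn_zero.congr_fun (fun t ht => (hzero t ht).symm) hdiffm
      have hunion : dom ∪ (Set.Ioi (0:ℝ) \ dom) = Set.Ioi (0:ℝ) := Set.union_diff_cancel hsub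
      constructor
      · rw [← hunion]; exact hint.union hint0
      · rw [hu, heq, ← hunion,
          setIntegral_union (Set.disjoint_sdiff_right) hdiffm hint hint0]
        rw [setIntegral_congr_fun hdiffm hzero]
        simp

lemma gev_neg_eq {γ : ℝ} (hγ : γ < 0) :
    gevCdfFull γ = fun y => Real.exp (-(max (1 + γ * y) 0) ^ (-1/γ)) := by
  funext y
  unfold gevCdfFull
  rw [if_neg (ne_of_lt hγ)]
  by_cases h : 1 + γ * y > 0
  · rw [if_pos h, max_eq_left h.le]
  · rw [if_neg h, if_neg (by linarith : ¬ γ > 0), max_eq_right (by push_neg at h; linarith)]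
    rw [Real.zero_rpow (by
      have : 0 < -1/γ := div_pos_of_neg_of_neg (by norm_num) hγ
      exact ne_of_gt this)]
    simp

lemma gev_contAt {γ c : ℝ} (h : γ = 0 ∨ γ < 0 ∨ (0 < γ ∧ 0 < 1 + γ * c)) :
    ContinuousAt (gevCdfFull γ) c := by
  rcases h with rfl | hneg | ⟨hpos, hc⟩
  · have : gevCdfFull 0 = fun y => Real.exp (-Real.exp (-y)) := by
      funext y; simp [gevCdfFull]
    rw [this]
    fun_prop
  · rw [gev_neg_eq hneg]
    have h1 : Continuous fun y : ℝ => max (1 + γ * y) 0 :=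
      (continuous_const.add (continuous_const.mul continuous_id)).max continuous_const
    have h2 : Continuous fun y : ℝ => (max (1 + γ * y) 0) ^ (-1/γ) :=
      h1.rpow_const fun y => Or.inr (le_of_lt (div_pos_of_neg_of_neg (by norm_num) hneg))
    exact (Real.continuous_exp.comp h2.neg).continuousAt
  · have hopen : IsOpen {y : ℝ | 0 < 1 + γ * y} :=
      isOpen_lt continuous_const (continuous_const.add (continuous_const.mul continuous_id))
    have hmem : {y : ℝ | 0 < 1 + γ * y} ∈ nhds c := hopen.mem_nhds hc
    have hev : gevCdfFull γ =ᶠ[nhds c] fun y => Real.exp (-(1 + γ * y) ^ (-1/γ)) := by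
      filter_upwards [hmem] with y hy
      unfold gevCdfFull
      rw [if_neg (ne_of_gt hpos), if_pos hy]
    have hca : ContinuousAt (fun y : ℝ => Real.exp (-(1 + γ * y) ^ (-1/γ))) c := by
      have hb : ContinuousAt (fun y : ℝ => 1 + γ * y) c := by fun_prop
      have h2 : ContinuousAt (fun y : ℝ => (1 + γ * y) ^ (-1/γ)) c :=
        hb.rpow_const (Or.inl (ne_of_gt hc))
      exact (Real.continuous_exp.continuousAt).comp h2.neg
    exact hca.congr hev.symm

lemma meas_lt_eq {Ω : Type*} [MeasureSpace Ω] [IsProbabilityMeasure (ℙ : Measure Ω)]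
    {γ : ℝ} {Z : Ω → ℝ}
    (hcdf : ∀ x : ℝ, ℙ {ω | Z ω ≤ x} = ENNReal.ofReal (gevCdfFull γ x)) (c : ℝ) :
    ℙ {ω | Z ω < c} = ENNReal.ofReal (gevCdfFull γ c) := by
  by_cases hbad : 0 < γ ∧ 1 + γ * c ≤ 0
  · obtain ⟨hpos, hc⟩ := hbad
    have hG : gevCdfFull γ c = 0 := by
      unfold gevCdfFull
      rw [if_neg (ne_of_gt hpos), if_neg (by linarith), if_pos hpos]
    have h1 : ℙ {ω | Z ω < c} ≤ ℙ {ω | Z ω ≤ c} :=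
      measure_mono fun ω (h : Z ω < c) => le_of_lt h
    rw [hcdf c, hG] at h1
    simp only [ENNReal.ofReal_zero, le_zero_iff] at h1
    rw [h1, hG]
    simp
  · have hcont : ContinuousAt (gevCdfFull γ) c := by
      apply gev_contAt
      rcases lt_trichotomy γ 0 with h | h | h
      · exact Or.inr (Or.inl h)
      · exact Or.inl h
      · push_neg at hbad
        exact Or.inr (Or.inr ⟨h, hbad h⟩)
    have hmono : Monotone fun n : ℕ => {ω | Z ω ≤ c - 1 / (n + 1)} := by
      intro n m hnm ω (h : Z ω ≤ c - 1 / (n + 1))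
      have h1 : (1:ℝ) / (m + 1) ≤ 1 / (n + 1) := by
        apply one_div_le_one_div_of_le (by positivity)
        have : (n:ℝ) ≤ (m:ℝ) := Nat.cast_le.mpr hnm
        linarith
      exact le_trans h (by linarith)
    have hunion : (⋃ n : ℕ, {ω | Z ω ≤ c - 1 / (n + 1)}) = {ω | Z ω < c} := by
      ext ω
      simp only [Set.mem_iUnion, Set.mem_setOf_eq]
      constructor
      · rintro ⟨n, hn⟩
        have : (0:ℝ) < 1 / (n + 1) := by positivity
        linarith
      · intro h
        obtain ⟨n, hn⟩ := exists_nat_one_div_lt (by linarith : 0 < c - Z ω)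
        exact ⟨n, by linarith⟩
    have h1 : Filter.Tendsto (fun n : ℕ => ℙ {ω | Z ω ≤ c - 1 / (n + 1)}) Filter.atTop
        (nhds (ℙ {ω | Z ω < c})) := by
      have := tendsto_measure_iUnion_atTop (μ := (ℙ : Measure Ω)) hmono
      rwa [hunion] at this
    have h2 : Filter.Tendsto (fun n : ℕ => ℙ {ω | Z ω ≤ c - 1 / (n + 1)}) Filter.atTop
        (nhds (ENNReal.ofReal (gevCdfFull γ c))) := by
      simp only [hcdf]
      apply ENNReal.tendsto_ofReal
      apply hcont.tendsto.comp
      have : Filter.Tendsto (fun n : ℕ => 1 / ((n:ℝ) + 1)) Filter.atTop (nhds 0) :=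
        tendsto_one_div_add_atTop_nhds_zero_nat
      have := (tendsto_const_nhds (x := c) (f := Filter.atTop (α := ℕ))).sub this
      simpa using this
    exact tendsto_nhds_unique h1 h2

lemma one_sub_ofReal_exp_le {a : ℝ} (ha : 0 ≤ a) :
    1 - ENNReal.ofReal (Real.exp (-a)) ≤ ENNReal.ofReal a := by
  rw [tsub_le_iff_right, ← ENNReal.ofReal_add ha (Real.exp_pos (-a)).le,
    ← ENNReal.ofReal_one]
  apply ENNReal.ofReal_le_ofReal
  have := Real.add_one_le_exp (-a)
  linarith

lemma gevTail_integrableOn {γ : ℝ} (hγ0 : 0 ≤ γ) (hγ : γ < 1) :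
    IntegrableOn (fun t => gevTail γ t) (Set.Ioi (0:ℝ)) := by
  rcases eq_or_lt_of_le hγ0 with h | hpos
  · have : (fun t => gevTail γ t) = fun t : ℝ => Real.exp (-1 * t) := by
      funext t; simp [gevTail, ← h, neg_one_mul]
    rw [this]
    exact exp_neg_integrableOn_Ioi 0 one_pos
  · have hfun : (fun t => gevTail γ t) = fun t : ℝ => (1 + γ * t) ^ (-1/γ) := by
      funext t; simp [gevTail, ne_of_gt hpos]
    rw [hfun]
    have hmeas : Measurable (fun t : ℝ => (1 + γ * t) ^ (-1/γ)) := by fun_prop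
    have hexp : -1/γ ≤ 0 := le_of_lt (div_neg_of_neg_of_pos (by norm_num) hpos)
    rw [show Set.Ioi (0:ℝ) = Set.Ioc 0 1 ∪ Set.Ioi 1 from
      (Set.Ioc_union_Ioi_eq_Ioi zero_le_one).symm]
    apply IntegrableOn.union
    · have hc : IntegrableOn (fun _ : ℝ => (1:ℝ)) (Set.Ioc (0:ℝ) 1) volume :=
        integrableOn_const measure_Ioc_lt_top.ne
      apply Integrable.mono' hc hmeas.aestronglyMeasurable.restrict
      filter_upwards [ae_restrict_mem measurableSet_Ioc] with t ht
      have h1 : (1:ℝ) ≤ 1 + γ * t := by nlinarith [ht.1]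
      rw [Real.norm_eq_abs, abs_of_nonneg (Real.rpow_nonneg (by linarith) _)]
      exact Real.rpow_le_one_of_one_le_of_nonpos h1 hexp
    · have hlt : -1/γ < -1 := by
        rw [neg_div]
        have : 1 < 1/γ := by rw [lt_div_iff₀ hpos]; linarith
        linarith
      apply Integrable.mono'
        ((integrableOn_Ioi_rpow_of_lt hlt one_pos).const_mul (γ ^ (-1/γ)))
        hmeas.aestronglyMeasurable.restrict
      filter_upwards [ae_restrict_mem measurableSet_Ioi] with t ht
      have ht0 : (0:ℝ) < t := lt_trans one_pos ht
      have h1 : (0:ℝ) < γ * t := by positivity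
      have h2 : (1 + γ * t) ^ (-1/γ) ≤ (γ * t) ^ (-1/γ) :=
        Real.rpow_le_rpow_of_nonpos h1 (by linarith) hexp
      rw [Real.norm_eq_abs, abs_of_nonneg (Real.rpow_nonneg (by nlinarith) _)]
      calc (1 + γ * t) ^ (-1/γ) ≤ (γ * t) ^ (-1/γ) := h2
        _ = γ ^ (-1/γ) * t ^ (-1/γ) := Real.mul_rpow hpos.le ht0.le

lemma intZplus {Ω : Type*} [MeasureSpace Ω] [IsProbabilityMeasure (ℙ : Measure Ω)]
    {γ : ℝ} (hγ : γ < 1) {Z : Ω → ℝ} (hZ : Measurable Z)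
    (hcdf : ∀ x : ℝ, ℙ {ω | Z ω ≤ x} = ENNReal.ofReal (gevCdfFull γ x)) :
    Integrable (fun ω => max (Z ω) 0) ℙ := by
  rcases lt_or_ge γ 0 with hneg | hpos
  · have hγ0 : γ ≠ 0 := ne_of_lt hneg
    have hend : ℙ {ω | Z ω ≤ -1/γ} = 1 := by
      rw [hcdf]
      have hG1 : gevCdfFull γ (-1/γ) = 1 := by
        unfold gevCdfFull
        rw [if_neg hγ0, if_neg (by
          rw [show γ * (-1/γ) = -1 from by field_simp]
          norm_num), if_neg (by linarith)]
      rw [hG1]; simp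
    have hae : ∀ᵐ ω ∂(ℙ : Measure Ω), Z ω ≤ -1/γ := by
      rw [ae_iff]
      have hms : MeasurableSet {ω | Z ω ≤ -1/γ} := hZ measurableSet_Iic
      have hcompl := measure_compl (μ := (ℙ : Measure Ω)) hms (measure_ne_top _ _)
      rw [hend, measure_univ] at hcompl
      simpa [Set.compl_setOf] using hcompl
    apply Integrable.mono' (integrable_const (μ := (ℙ : Measure Ω)) (max (-1/γ) 0))
    · exact (hZ.max measurable_const).aestronglyMeasurable
    · filter_upwards [hae] with ω hω
      rw [Real.norm_eq_abs, abs_of_nonneg (le_max_right _ _)]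
      exact max_le_max hω le_rfl
  · have hmeas : Measurable fun ω => max (Z ω) 0 := hZ.max measurable_const
    have lc := lintegral_eq_lintegral_meas_lt (ℙ : Measure Ω)
      (f := fun ω => max (Z ω) 0) (Filter.Eventually.of_forall fun ω => le_max_right _ _)
      hmeas.aemeasurable
    have hfin : ∫⁻ ω, ENNReal.ofReal (max (Z ω) 0) ∂(ℙ : Measure Ω) < ⊤ := by
      rw [lc]
      have hbound : ∀ t ∈ Set.Ioi (0:ℝ),
          ℙ {a | t < max (Z a) 0} ≤ ENNReal.ofReal (gevTail γ t) := by
        intro t ht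
        have ht0 : (0:ℝ) < t := ht
        have hset : {a | t < max (Z a) 0} = {ω | Z ω ≤ t}ᶜ := by
          ext ω
          simp only [Set.mem_setOf_eq, Set.mem_compl_iff, lt_max_iff, not_le]
          constructor
          · rintro (h | h)
            · exact h
            · linarith
          · exact Or.inl
        have h1t : 0 < 1 + γ * t := by nlinarith
        have hGt : gevCdfFull γ t = Real.exp (-(gevTail γ t)) := by
          unfold gevCdfFull gevTail
          by_cases h : γ = 0
          · rw [if_pos h, if_pos h]
          · rw [if_neg h, if_neg h, if_pos h1t]
        have hcompl := measure_compl (μ := (ℙ : Measure Ω)) (s := {ω | Z ω ≤ t})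
          (hZ measurableSet_Iic) (measure_ne_top _ _)
        rw [hset, hcompl, measure_univ, hcdf, hGt]
        exact one_sub_ofReal_exp_le (le_of_lt (gevTail_pos h1t))
      calc ∫⁻ t in Set.Ioi 0, ℙ {a | t < max (Z a) 0}
          ≤ ∫⁻ t in Set.Ioi 0, ENNReal.ofReal (gevTail γ t) := by
            apply lintegral_mono_ae
            filter_upwards [ae_restrict_mem measurableSet_Ioi] with t ht
            exact hbound t ht
        _ = ENNReal.ofReal (∫ t in Set.Ioi 0, gevTail γ t) := by
            refine (ofReal_integral_eq_lintegral_ofReal (gevTail_integrableOn hpos hγ) ?_).symm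
            filter_upwards [ae_restrict_mem measurableSet_Ioi] with t ht
            have ht0 : (0:ℝ) < t := ht
            exact le_of_lt (gevTail_pos (by nlinarith))
        _ < ⊤ := ENNReal.ofReal_lt_top
    refine ⟨hmeas.aestronglyMeasurable, ?_⟩
    exact (hasFiniteIntegral_iff_ofReal
      (Filter.Eventually.of_forall fun ω => le_max_right _ _)).mpr hfin

/-- For `Z ~ G_γ` with `γ < 1`, the function `f₁(x) = x G_γ(x) + E[Z 1(Z > x)]` admits the
representation `f₁(x) = ∫_{(1+γx)^{-1/γ}}^∞ e^{-t} t^{-γ-1} dt + β_{γ,0}` with `β_{γ,0} = E[Z]`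
(lower limit `e^{-x}` for `γ = 0`). -/
theorem f1_integral_representation {Ω : Type*} [MeasureSpace Ω]
    [IsProbabilityMeasure (ℙ : Measure Ω)] (γ : ℝ) (hγ : γ < 1)
    (Z : Ω → ℝ) (hZ : Measurable Z)
    (hcdf : ∀ x : ℝ, ℙ {ω | Z ω ≤ x} = ENNReal.ofReal (gevCdfFull γ x)) :
    ∀ x : ℝ, 1 + γ * x > 0 →
      x * gevCdfFull γ x + ∫ ω in {ω | Z ω > x}, Z ω ∂ℙ =
        (∫ t in Set.Ioi (gevTail γ x), Real.exp (-t) * t ^ (-γ - 1)) + ∫ ω, Z ω ∂ℙ := by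
  have main : ∀ x' : ℝ, 0 < 1 + γ * x' →
      Integrable (fun ω => max (x' - Z ω) 0) ℙ ∧
      ∫ ω, max (x' - Z ω) 0 ∂ℙ
        = ∫ s in Set.Ioi (gevTail γ x'), Real.exp (-s) * s ^ (-γ - 1) := by
    intro x' hx'
    obtain ⟨hGint, hIeq⟩ := subst_main hγ hx'
    have hmeas : Measurable fun ω => max (x' - Z ω) 0 :=
      (measurable_const.sub hZ).max measurable_const
    have hnn : 0 ≤ᵐ[(ℙ : Measure Ω)] fun ω => max (x' - Z ω) 0 :=
      Filter.Eventually.of_forall fun ω => le_max_right _ _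
    have lc := lintegral_eq_lintegral_meas_lt (ℙ : Measure Ω) hnn hmeas.aemeasurable
    have hcongr : ∫⁻ t in Set.Ioi 0, ℙ {a | t < max (x' - Z a) 0}
        = ∫⁻ t in Set.Ioi 0, ENNReal.ofReal (gevCdfFull γ (x' - t)) := by
      apply setLIntegral_congr_fun measurableSet_Ioi
      intro t ht
      have hset : {a | t < max (x' - Z a) 0} = {ω | Z ω < x' - t} := by
        ext ω
        simp only [Set.mem_setOf_eq, lt_max_iff]
        constructor
        · rintro (h | h)
          · linarith
          · exact absurd h (not_lt.2 (le_of_lt ht))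
        · intro h; exact Or.inl (by linarith)
      beta_reduce
      rw [hset, meas_lt_eq hcdf]
    have hGnn : 0 ≤ᵐ[volume.restrict (Set.Ioi (0:ℝ))] fun t => gevCdfFull γ (x' - t) :=
      Filter.Eventually.of_forall fun t => gev_nonneg γ _
    have hofReal : ∫⁻ t in Set.Ioi 0, ENNReal.ofReal (gevCdfFull γ (x' - t))
        = ENNReal.ofReal (∫ t in Set.Ioi 0, gevCdfFull γ (x' - t)) :=
      (ofReal_integral_eq_lintegral_ofReal hGint hGnn).symm
    have hfin : ∫⁻ ω, ENNReal.ofReal (max (x' - Z ω) 0) ∂(ℙ : Measure Ω) < ⊤ := by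
      rw [lc, hcongr, hofReal]; exact ENNReal.ofReal_lt_top
    have hint : Integrable (fun ω => max (x' - Z ω) 0) ℙ :=
      ⟨hmeas.aestronglyMeasurable, (hasFiniteIntegral_iff_ofReal hnn).mpr hfin⟩
    refine ⟨hint, ?_⟩
    have h1 : ENNReal.ofReal (∫ ω, max (x' - Z ω) 0 ∂ℙ)
        = ENNReal.ofReal (∫ t in Set.Ioi 0, gevCdfFull γ (x' - t)) :=
      (ofReal_integral_eq_lintegral_ofReal hint hnn).trans
        (lc.trans (hcongr.trans hofReal))
    have h2 : ∫ ω, max (x' - Z ω) 0 ∂ℙ = ∫ t in Set.Ioi 0, gevCdfFull γ (x' - t) := by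
      have ha : 0 ≤ ∫ ω, max (x' - Z ω) 0 ∂ℙ :=
        integral_nonneg fun ω => le_max_right _ _
      have hb : 0 ≤ ∫ t in Set.Ioi (0:ℝ), gevCdfFull γ (x' - t) :=
        setIntegral_nonneg measurableSet_Ioi fun t _ => gev_nonneg γ _
      exact (ENNReal.ofReal_eq_ofReal_iff ha hb).1 h1
    rw [h2, hIeq]
  -- integrability of Z
  have hZm : Integrable (fun ω => max (-Z ω) 0) ℙ := by
    have h0 := (main 0 (by norm_num)).1
    simpa [zero_sub] using h0
  have hZp : Integrable (fun ω => max (Z ω) 0) ℙ := intZplus hγ hZ hcdf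
  have hZint : Integrable Z ℙ := by
    have hfe : Z = fun ω => max (Z ω) 0 - max (-Z ω) 0 :=
      funext fun ω => (max_zero_sub_max_neg_zero_eq_self (Z ω)).symm
    rw [hfe]
    exact hZp.sub hZm
  intro x hx
  obtain ⟨hintmax, hkey⟩ := main x hx
  have hmsgt : MeasurableSet {ω | Z ω > x} := measurableSet_lt measurable_const hZ
  have hmsle : MeasurableSet {ω | Z ω ≤ x} := hZ measurableSet_Iic
  have hsplit : (∫ ω in {ω | Z ω > x}, Z ω ∂ℙ) + ∫ ω in {ω | Z ω ≤ x}, Z ω ∂ℙ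
      = ∫ ω, Z ω ∂ℙ := by
    have hcompl : {ω | Z ω > x}ᶜ = {ω | Z ω ≤ x} := by
      ext ω; simp [not_lt]
    rw [← hcompl]
    exact integral_add_compl hmsgt hZint
  have hmaxzero : ∫ ω in {ω | Z ω ≤ x}ᶜ, max (x - Z ω) 0 ∂ℙ = 0 := by
    rw [setIntegral_congr_fun hmsle.compl (g := fun _ => (0:ℝ)) ?_]
    · simp
    · intro ω hω
      simp only [Set.mem_compl_iff, Set.mem_setOf_eq, not_le] at hω
      exact max_eq_right (by linarith)
  have hmaxsplit : ∫ ω, max (x - Z ω) 0 ∂ℙ = ∫ ω in {ω | Z ω ≤ x}, (x - Z ω) ∂ℙ := by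
    have h1 := integral_add_compl hmsle hintmax
    have h3 : ∫ ω in {ω | Z ω ≤ x}, max (x - Z ω) 0 ∂ℙ
        = ∫ ω in {ω | Z ω ≤ x}, (x - Z ω) ∂ℙ := by
      apply setIntegral_congr_fun hmsle
      intro ω hω
      exact max_eq_left (by simp only [Set.mem_setOf_eq] at hω; linarith)
    rw [← h1, hmaxzero, h3]
    ring
  have hGx : (ℙ {ω | Z ω ≤ x}).toReal = gevCdfFull γ x := by
    rw [hcdf, ENNReal.toReal_ofReal (gev_nonneg γ x)]
  have hconst : ∫ ω in {ω | Z ω ≤ x}, (x - Z ω) ∂ℙ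
      = x * gevCdfFull γ x - ∫ ω in {ω | Z ω ≤ x}, Z ω ∂ℙ := by
    rw [integral_sub (integrable_const x).integrableOn hZint.integrableOn,
      setIntegral_const, measureReal_def, hGx, smul_eq_mul]
    ring
  have hfinal : ∫ ω, max (x - Z ω) 0 ∂ℙ
      = ∫ s in Set.Ioi (gevTail γ x), Real.exp (-s) * s ^ (-γ - 1) := hkey
  rw [hmaxsplit, hconst] at hfinal
  linarith
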